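/- arXiv:2605.00463 — 3 statements merged into one kernel-verified Lean document; each statement's English description precedes it below -/
import Mathlib

section
/- Let k be a field and A a commutative integral domain that is a k-algebra. Let R be the subring of the polynomial ring A[X] given by R = { f ∈ A[X] : f.coeff 0 ∈ algebraMap k A '' univ }, i.e., R = k + X·A[X], graded by R₀ = k·1 and R_n = A·Xⁿ for n ≥ 1. Let 𝔪 = { f ∈ R : f.coeff 0 = 0 } = X·A[X], the maximal homogeneous ideal of R. Then the map sending a prime ideal 𝔭 of A to P_𝔭 = { f ∈ R : f.coeff 0 = 0 and f.coeff i ∈ 𝔭 for all i ≥ 1 } is a bijection from Spec(A) onto the set of homogeneous prime ideals of R different from 𝔪, and it preserves and reflects inclusions: 𝔭 ⊆ 𝔮 if and only if P_𝔭 ⊆ P_𝔮. In particular each P_𝔭 is a homogeneous prime ideal of R with P_𝔭 ⊊ 𝔪. -/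
set_option maxHeartbeats 1000000
set_option synthInstance.maxHeartbeats 400000

open Polynomial in
/-- The subring `R = k + X·A[X]` of the polynomial ring `A[X]`: the polynomials whose
constant term lies in the image of `k`. -/
def kPlusX (k A : Type*) [CommRing k] [CommRing A] [Algebra k A] : Subring (Polynomial A) where
  carrier := {f | f.coeff 0 ∈ (algebraMap k A).range}
  mul_mem' := by
    intro a b ha hb
    simpa only [Set.mem_setOf_eq, Polynomial.mul_coeff_zero] using mul_mem ha hb
  one_mem' := by
    simpa only [Set.mem_setOf_eq, Polynomial.coeff_one_zero] using one_mem (algebraMap k A).range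
  add_mem' := by
    intro a b ha hb
    simpa only [Set.mem_setOf_eq, Polynomial.coeff_add] using add_mem ha hb
  zero_mem' := by
    simpa only [Set.mem_setOf_eq, Polynomial.coeff_zero] using zero_mem (algebraMap k A).range
  neg_mem' := by
    intro a ha
    simpa only [Set.mem_setOf_eq, Polynomial.coeff_neg] using neg_mem ha

/-- An ideal `I` of `R = k + X·A[X]` is *homogeneous* if together with any element it
contains all its homogeneous components `(coeff i f)·Xⁱ` (which all lie in `R`). -/
def IsHomog {k A : Type*} [CommRing k] [CommRing A] [Algebra k A]
    (I : Ideal (kPlusX k A)) : Prop :=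
  ∀ f ∈ I, ∀ i : ℕ, ∀ g : kPlusX k A,
    (g : Polynomial A) = Polynomial.C ((f : Polynomial A).coeff i) * Polynomial.X ^ i → g ∈ I


variable (k A : Type*) [CommRing k] [CommRing A] [Algebra k A]

/-- The irrelevant ideal `𝔪 = X·A[X] = ⨁_{n ≥ 1} A·Xⁿ` of `R = k + X·A[X]`: the elements
with vanishing constant term. -/
def mIdeal : Ideal (kPlusX k A) where
  carrier := {f | (f : Polynomial A).coeff 0 = 0}
  add_mem' := by
    intro a b ha hb
    simp only [Set.mem_setOf_eq] at *
    rw [Subring.coe_add, Polynomial.coeff_add, ha, hb, add_zero]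
  zero_mem' := by
    simp only [Set.mem_setOf_eq, ZeroMemClass.coe_zero, Polynomial.coeff_zero]
  smul_mem' := by
    intro c f hf
    simp only [Set.mem_setOf_eq, smul_eq_mul] at *
    rw [Subring.coe_mul, Polynomial.mul_coeff_zero, hf, mul_zero]

/-- For a prime (or any) ideal `𝔭` of `A`, the ideal
`P_𝔭 = { f ∈ R : coeff 0 f = 0 and coeff i f ∈ 𝔭 for all i ≥ 1 }` of `R = k + X·A[X]`. -/
def Pideal (𝔭 : Ideal A) : Ideal (kPlusX k A) where
  carrier := {f | (f : Polynomial A).coeff 0 = 0 ∧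
    ∀ i : ℕ, 1 ≤ i → (f : Polynomial A).coeff i ∈ 𝔭}
  add_mem' := by
    intro a b ha hb
    refine ⟨?_, fun i hi => ?_⟩
    · rw [Subring.coe_add, Polynomial.coeff_add, ha.1, hb.1, add_zero]
    · rw [Subring.coe_add, Polynomial.coeff_add]
      exact Ideal.add_mem 𝔭 (ha.2 i hi) (hb.2 i hi)
  zero_mem' := by
    refine ⟨?_, fun i hi => ?_⟩ <;>
      simp only [ZeroMemClass.coe_zero, Polynomial.coeff_zero, Submodule.zero_mem]
  smul_mem' := by
    intro c f hf
    refine ⟨?_, fun i hi => ?_⟩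
    · rw [smul_eq_mul, Subring.coe_mul, Polynomial.mul_coeff_zero, hf.1, mul_zero]
    · rw [smul_eq_mul, Subring.coe_mul, Polynomial.coeff_mul]
      refine Ideal.sum_mem 𝔭 fun x hx => ?_
      rcases Nat.eq_zero_or_pos x.2 with h2 | h2
      · rw [h2, hf.1, mul_zero]
        exact 𝔭.zero_mem
      · exact Ideal.mul_mem_left 𝔭 _ (hf.2 x.2 h2)

section Aux

open Polynomial

variable {k A : Type*} [CommRing k] [CommRing A] [Algebra k A]

lemma mem_Pideal {𝔭 : Ideal A} {f : kPlusX k A} :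
    f ∈ Pideal k A 𝔭 ↔ ((f : Polynomial A).coeff 0 = 0 ∧
      ∀ i : ℕ, 1 ≤ i → (f : Polynomial A).coeff i ∈ 𝔭) := Iff.rfl

lemma mem_mIdeal {f : kPlusX k A} :
    f ∈ mIdeal k A ↔ (f : Polynomial A).coeff 0 = 0 := Iff.rfl

lemma mono_mem_kPlusX (a : A) (n : ℕ) : (C a * X ^ (n + 1) : Polynomial A) ∈ kPlusX k A := by
  have : (C a * X ^ (n + 1) : Polynomial A).coeff 0 = 0 := by
    simp [Polynomial.mul_coeff_zero, Polynomial.coeff_X_pow]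
  show _ ∈ (algebraMap k A).range
  rw [this]
  exact zero_mem _

/-- the element `a·X^(n+1)` of `R = k + X·A[X]`. -/
noncomputable def mono (a : A) (n : ℕ) : kPlusX k A := ⟨C a * X ^ (n + 1), mono_mem_kPlusX a n⟩

@[simp] lemma mono_coe (a : A) (n : ℕ) :
    ((mono a n : kPlusX k A) : Polynomial A) = C a * X ^ (n + 1) := rfl

lemma mono_coeff (a : A) (n j : ℕ) :
    ((mono a n : kPlusX k A) : Polynomial A).coeff j = if j = n + 1 then a else 0 := by
  simp [mono, Polynomial.coeff_C_mul, Polynomial.coeff_X_pow]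

lemma mono_mul (a b : A) (n m : ℕ) :
    (mono a n : kPlusX k A) * mono b m = mono (a * b) (n + m + 1) := by
  apply Subtype.ext
  show (C a * X ^ (n + 1)) * (C b * X ^ (m + 1)) = C (a * b) * X ^ (n + m + 1 + 1)
  rw [C_mul]; ring

lemma mono_add (a b : A) (n : ℕ) :
    (mono a n : kPlusX k A) + mono b n = mono (a + b) n := by
  apply Subtype.ext
  show (C a * X ^ (n + 1)) + (C b * X ^ (n + 1)) = C (a + b) * X ^ (n + 1)
  rw [C_add]; ring

lemma mono_zero (n : ℕ) : (mono (0 : A) n : kPlusX k A) = 0 := by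
  apply Subtype.ext
  show C (0 : A) * X ^ (n + 1) = 0
  simp

lemma comp_mem_kPlusX (f : kPlusX k A) (i : ℕ) :
    (C ((f : Polynomial A).coeff i) * X ^ i : Polynomial A) ∈ kPlusX k A := by
  show _ ∈ (algebraMap k A).range
  rcases i with _ | i
  · simp only [pow_zero, mul_one, Polynomial.coeff_C_zero]
    exact f.2
  · have : (C ((f : Polynomial A).coeff (i + 1)) * X ^ (i + 1) : Polynomial A).coeff 0 = 0 := by
      simp [Polynomial.mul_coeff_zero, Polynomial.coeff_X_pow]
    rw [this]; exact zero_mem _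

/-- The `i`-th homogeneous component of `f`, as an element of `R`. -/
noncomputable def comp (f : kPlusX k A) (i : ℕ) : kPlusX k A :=
  ⟨C ((f : Polynomial A).coeff i) * X ^ i, comp_mem_kPlusX f i⟩

@[simp] lemma comp_coe (f : kPlusX k A) (i : ℕ) :
    ((comp f i : kPlusX k A) : Polynomial A) = C ((f : Polynomial A).coeff i) * X ^ i := rfl

lemma eq_sum_comp (f : kPlusX k A) :
    f = ∑ i ∈ Finset.range ((f : Polynomial A).natDegree + 1), comp f i := by
  apply Subtype.ext
  push_cast
  simp only [comp_coe, C_mul_X_pow_eq_monomial]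
  exact Polynomial.as_sum_range _

lemma mem_of_comps {I : Ideal (kPlusX k A)} {f : kPlusX k A}
    (h : ∀ i, comp f i ∈ I) : f ∈ I := by
  rw [eq_sum_comp f]
  exact Ideal.sum_mem _ fun i _ => h i

lemma eq_zero_of_range_mem_prime {k A : Type*} [Field k] [CommRing A] [Nontrivial A]
    [Algebra k A] (𝔭 : Ideal A) (hp : 𝔭.IsPrime) {c : A}
    (hc : c ∈ (algebraMap k A).range) (h : c ∈ 𝔭) : c = 0 := by
  obtain ⟨x, rfl⟩ := hc
  rcases eq_or_ne x 0 with rfl | hx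
  · simp
  · exact absurd (Ideal.eq_top_of_isUnit_mem _ h
      ((isUnit_iff_ne_zero.mpr hx).map (algebraMap k A))) hp.ne_top

lemma mono_one_pow (n : ℕ) : (mono (1 : A) 0 : kPlusX k A) ^ (n + 1) = mono 1 n := by
  induction n with
  | zero => rw [zero_add, pow_one]
  | succ m ih => rw [pow_succ, ih, mono_mul, one_mul, Nat.add_zero]

/-- Pull back an ideal of `R` along `a ↦ a·X`. -/
def pullIdeal (Q : Ideal (kPlusX k A))
    (hsm : ∀ r a : A, (mono a 0 : kPlusX k A) ∈ Q → (mono (r * a) 0 : kPlusX k A) ∈ Q) :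
    Ideal A where
  carrier := {a | (mono a 0 : kPlusX k A) ∈ Q}
  add_mem' := by
    intro a b ha hb
    show (mono (a + b) 0 : kPlusX k A) ∈ Q
    rw [← mono_add]
    exact Ideal.add_mem _ ha hb
  zero_mem' := by
    show (mono (0 : A) 0 : kPlusX k A) ∈ Q
    rw [mono_zero]
    exact Q.zero_mem
  smul_mem' := by
    intro r a ha
    exact hsm r a ha

lemma mem_pullIdeal {Q : Ideal (kPlusX k A)} {hsm} {a : A} :
    a ∈ pullIdeal Q hsm ↔ (mono a 0 : kPlusX k A) ∈ Q := Iff.rfl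

end Aux

/-- for a domain `A` containing a field `k` and the graded ring
`R = k + X·A[X]` with irrelevant ideal `𝔪 = X·A[X]`, the assignment `𝔭 ↦ P_𝔭` is an
inclusion-preserving and inclusion-reflecting bijection from `Spec A` onto the set of
homogeneous prime ideals of `R` different from `𝔪`; in particular each `P_𝔭` is a
homogeneous prime ideal strictly contained in `𝔪`. -/
theorem spec_equiv_proj (k A : Type*) [Field k] [CommRing A] [IsDomain A] [Algebra k A] :
    (∀ 𝔭 : Ideal A, 𝔭.IsPrime →
        (Pideal k A 𝔭).IsPrime ∧ IsHomog (Pideal k A 𝔭) ∧ Pideal k A 𝔭 < mIdeal k A) ∧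
      (∀ 𝔭 𝔮 : Ideal A, 𝔭.IsPrime → 𝔮.IsPrime →
        (𝔭 ≤ 𝔮 ↔ Pideal k A 𝔭 ≤ Pideal k A 𝔮)) ∧
      (∀ 𝔭 𝔮 : Ideal A, 𝔭.IsPrime → 𝔮.IsPrime →
        Pideal k A 𝔭 = Pideal k A 𝔮 → 𝔭 = 𝔮) ∧
      (∀ Q : Ideal (kPlusX k A), Q.IsPrime → IsHomog Q → Q ≠ mIdeal k A →
        ∃ 𝔭 : Ideal A, 𝔭.IsPrime ∧ Q = Pideal k A 𝔭) := by
  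
  classical
  have keyzero : ∀ (𝔭 : Ideal A), 𝔭.IsPrime → ∀ f : kPlusX k A,
      (∀ i, (f : Polynomial A).coeff i ∈ 𝔭) → f ∈ Pideal k A 𝔭 := by
    intro 𝔭 hp f hf
    exact ⟨eq_zero_of_range_mem_prime 𝔭 hp f.2 (hf 0), fun i _ => hf i⟩
  have hprime : ∀ 𝔭 : Ideal A, 𝔭.IsPrime → (Pideal k A 𝔭).IsPrime := by
    intro 𝔭 hp
    haveI := hp
    constructor
    · intro htop
      have h1 : (1 : kPlusX k A) ∈ Pideal k A 𝔭 := htop ▸ Submodule.mem_top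
      have h1' := h1.1
      rw [OneMemClass.coe_one, Polynomial.coeff_one_zero] at h1'
      exact one_ne_zero h1'
    · intro f g hfg
      have hall : ∀ i, ((f : Polynomial A) * g).coeff i ∈ 𝔭 := by
        intro i
        rcases i with _ | i
        · rw [← Subring.coe_mul, hfg.1]
          exact 𝔭.zero_mem
        · have := hfg.2 (i + 1) (Nat.succ_le_succ (Nat.zero_le _))
          rwa [Subring.coe_mul] at this
      have hmap : ((f : Polynomial A) * g).map (Ideal.Quotient.mk 𝔭) = 0 := by
        ext i
        simp only [Polynomial.coeff_map, Polynomial.coeff_zero,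
          Ideal.Quotient.eq_zero_iff_mem]
        exact hall i
      rw [Polynomial.map_mul] at hmap
      have hcoeffs : ∀ h : kPlusX k A,
          (h : Polynomial A).map (Ideal.Quotient.mk 𝔭) = 0 → h ∈ Pideal k A 𝔭 := by
        intro h h0
        apply keyzero 𝔭 hp
        intro i
        have : ((h : Polynomial A).map (Ideal.Quotient.mk 𝔭)).coeff i = 0 := by
          rw [h0]; simp
        rwa [Polynomial.coeff_map, Ideal.Quotient.eq_zero_iff_mem] at this
      rcases mul_eq_zero.mp hmap with h0 | h0
      · exact Or.inl (hcoeffs f h0)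
      · exact Or.inr (hcoeffs g h0)
  have hhomog : ∀ 𝔭 : Ideal A, 𝔭.IsPrime → IsHomog (Pideal k A 𝔭) := by
    intro 𝔭 hp f hf i g hg
    refine ⟨?_, ?_⟩
    · rcases i with _ | i
      · rw [hg, hf.1]; simp
      · rw [hg]
        simp [Polynomial.coeff_C_mul, Polynomial.coeff_X_pow]
    · intro j hj
      rw [hg, Polynomial.coeff_C_mul, Polynomial.coeff_X_pow]
      split_ifs with h
      · subst h
        rw [mul_one]
        exact hf.2 _ hj
      · rw [mul_zero]
        exact 𝔭.zero_mem
  have hlt : ∀ 𝔭 : Ideal A, 𝔭.IsPrime → Pideal k A 𝔭 < mIdeal k A := by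
    intro 𝔭 hp
    refine lt_of_le_of_ne (fun f hf => mem_mIdeal.mpr hf.1) ?_
    intro h
    have hX : (mono 1 0 : kPlusX k A) ∈ Pideal k A 𝔭 := by
      rw [h, mem_mIdeal, mono_coeff]
      simp
    have h1 := hX.2 1 le_rfl
    rw [mono_coeff] at h1
    simp only [if_pos rfl] at h1
    exact hp.ne_top ((Ideal.eq_top_iff_one 𝔭).mpr h1)
  have hmono2 : ∀ 𝔭 𝔮 : Ideal A, 𝔭.IsPrime → 𝔮.IsPrime →
      (𝔭 ≤ 𝔮 ↔ Pideal k A 𝔭 ≤ Pideal k A 𝔮) := by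
    intro 𝔭 𝔮 hp hq
    constructor
    · intro h f hf
      exact ⟨hf.1, fun i hi => h (hf.2 i hi)⟩
    · intro h a ha
      have hmem : (mono a 0 : kPlusX k A) ∈ Pideal k A 𝔭 := by
        refine ⟨?_, ?_⟩
        · rw [mono_coeff]; simp
        · intro i hi
          rw [mono_coeff]
          split_ifs with h1
          · exact ha
          · exact 𝔭.zero_mem
      have h1 := (h hmem).2 1 le_rfl
      rw [mono_coeff] at h1
      simpa using h1
  refine ⟨fun 𝔭 hp => ⟨hprime 𝔭 hp, hhomog 𝔭 hp, hlt 𝔭 hp⟩, hmono2, ?_, ?_⟩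
  · intro 𝔭 𝔮 hp hq h
    exact le_antisymm ((hmono2 𝔭 𝔮 hp hq).mpr h.le) ((hmono2 𝔮 𝔭 hq hp).mpr h.ge)
  · intro Q hQ hhom hne
    -- Step A : every element of Q has vanishing constant term
    have hQm : ∀ f ∈ Q, (f : Polynomial A).coeff 0 = 0 := by
      intro f hf
      by_contra h0
      obtain ⟨x, hx⟩ := f.2
      have hx0 : x ≠ 0 := by
        rintro rfl
        rw [map_zero] at hx
        exact h0 hx.symm
      have hgQ : comp f 0 ∈ Q := hhom f hf 0 (comp f 0) rfl
      have hinvmem : (Polynomial.C (algebraMap k A x⁻¹) : Polynomial A) ∈ kPlusX k A := by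
        show _ ∈ (algebraMap k A).range
        rw [Polynomial.coeff_C_zero]
        exact ⟨x⁻¹, rfl⟩
      have hunit : IsUnit (comp f 0 : kPlusX k A) := by
        refine IsUnit.of_mul_eq_one (a := comp f 0) (b := ⟨Polynomial.C (algebraMap k A x⁻¹), hinvmem⟩) ?_
        apply Subtype.ext
        push_cast
        show (Polynomial.C ((f : Polynomial A).coeff 0) * Polynomial.X ^ 0) *
          Polynomial.C (algebraMap k A x⁻¹) = 1
        rw [pow_zero, mul_one, ← hx, ← Polynomial.C_mul, ← map_mul, mul_inv_cancel₀ hx0,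
          map_one, Polynomial.C_1]
      exact hQ.ne_top (Ideal.eq_top_of_isUnit_mem _ hgQ hunit)
    -- Step B : X ∉ Q
    have hXQ : (mono (1 : A) 0 : kPlusX k A) ∉ Q := by
      intro hX
      apply hne
      apply le_antisymm
      · intro f hf
        exact mem_mIdeal.mpr (hQm f hf)
      · have hm1 : ∀ a : A, (mono a 0 : kPlusX k A) ∈ Q := by
          intro a
          have h2 : (mono a 0 : kPlusX k A) * mono a 0 ∈ Q := by
            rw [mono_mul]
            have heq : (mono (a * a) (0 + 0 + 1) : kPlusX k A) = mono 1 0 * mono (a * a) 0 := by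
              rw [mono_mul, one_mul]
            rw [heq]
            exact Ideal.mul_mem_right _ _ hX
          rcases hQ.mem_or_mem h2 with h | h <;> exact h
        have hmn : ∀ (a : A) (n : ℕ), (mono a n : kPlusX k A) ∈ Q := by
          intro a n
          induction n with
          | zero => exact hm1 a
          | succ m ih =>
            have heq : (mono a (m + 1) : kPlusX k A) = mono 1 0 * mono a m := by
              rw [mono_mul, one_mul, zero_add]
            rw [heq]
            exact Ideal.mul_mem_right _ _ hX
        intro f hf
        apply mem_of_comps
        intro i
        rcases i with _ | i
        · have heq : comp f 0 = (0 : kPlusX k A) := by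
            apply Subtype.ext
            rw [comp_coe, mem_mIdeal.mp hf]
            simp
          rw [heq]
          exact Q.zero_mem
        · have heq : comp f (i + 1) = mono ((f : Polynomial A).coeff (i + 1)) i := by
            apply Subtype.ext
            rfl
          rw [heq]
          exact hmn _ _
    -- Step C : shifting the degree of monomials in Q
    have hshift : ∀ (a : A) (n m : ℕ),
        (mono a n : kPlusX k A) ∈ Q → (mono a m : kPlusX k A) ∈ Q := by
      intro a n m h
      have hprod : (mono a m : kPlusX k A) * mono 1 n ∈ Q := by
        have heq : (mono a m : kPlusX k A) * mono 1 n = mono a n * mono 1 m := by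
          rw [mono_mul, mono_mul, mul_one, Nat.add_comm m n]
        rw [heq]
        exact Ideal.mul_mem_right _ _ h
      rcases hQ.mem_or_mem hprod with h' | h'
      · exact h'
      · exfalso
        apply hXQ
        rw [← mono_one_pow n] at h'
        exact hQ.mem_of_pow_mem _ h'
    -- Step D : the prime ideal 𝔭 of A
    have hsm : ∀ r a : A, (mono a 0 : kPlusX k A) ∈ Q → (mono (r * a) 0 : kPlusX k A) ∈ Q := by
      intro r a ha
      apply hshift _ 1 0
      have heq : (mono (r * a) 1 : kPlusX k A) = mono r 0 * mono a 0 := by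
        rw [mono_mul]
      rw [heq]
      exact Ideal.mul_mem_left _ _ ha
    refine ⟨pullIdeal Q hsm, ?_, ?_⟩
    · constructor
      · intro htop
        apply hXQ
        have h1 : (1 : A) ∈ pullIdeal Q hsm := htop ▸ Submodule.mem_top
        exact mem_pullIdeal.mp h1
      · intro a b hab
        have h1 : (mono (a * b) 0 : kPlusX k A) ∈ Q := mem_pullIdeal.mp hab
        have h2 : (mono (a * b) 1 : kPlusX k A) ∈ Q := hshift _ 0 1 h1
        have heq : (mono (a * b) 1 : kPlusX k A) = mono a 0 * mono b 0 := by
          rw [mono_mul]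
        rw [heq] at h2
        rcases hQ.mem_or_mem h2 with h | h
        · exact Or.inl (mem_pullIdeal.mpr h)
        · exact Or.inr (mem_pullIdeal.mpr h)
    · apply le_antisymm
      · intro f hf
        refine ⟨hQm f hf, ?_⟩
        intro i hi
        rcases i with _ | j
        · omega
        · have hcomp : comp f (j + 1) ∈ Q := hhom f hf (j + 1) (comp f (j + 1)) rfl
          have heq : comp f (j + 1) = mono ((f : Polynomial A).coeff (j + 1)) j := by
            apply Subtype.ext
            rfl
          rw [heq] at hcomp
          exact mem_pullIdeal.mpr (hshift _ j 0 hcomp)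
      · intro f hf
        apply mem_of_comps
        intro i
        rcases i with _ | j
        · have heq : comp f 0 = (0 : kPlusX k A) := by
            apply Subtype.ext
            rw [comp_coe, hf.1]
            simp
          rw [heq]
          exact Q.zero_mem
        · have hj : (f : Polynomial A).coeff (j + 1) ∈ pullIdeal Q hsm :=
            hf.2 (j + 1) (Nat.succ_le_succ (Nat.zero_le _))
          have h1 : (mono ((f : Polynomial A).coeff (j + 1)) 0 : kPlusX k A) ∈ Q :=
            mem_pullIdeal.mp hj
          have h2 := hshift _ 0 j h1
          have heq : comp f (j + 1) = mono ((f : Polynomial A).coeff (j + 1)) j := by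
            apply Subtype.ext
            rfl
          rw [heq]
          exact h2
end

section
/- Let k be a field and A a commutative integral domain that is a k-algebra, and let R = k + X·A[X] be the subring of A[X] consisting of polynomials with constant term in (the image of) k, graded by R₀ = k·1 and R_n = A·Xⁿ for n ≥ 1. Then the graded Krull dimension of R equals the Krull dimension of A plus one: the supremum of lengths of strictly increasing chains of homogeneous prime ideals of R equals ringKrullDim A + 1 (in WithBot ℕ∞). -/
set_option maxHeartbeats 1000000
set_option synthInstance.maxHeartbeats 400000

namespace KPlusXAux

open Polynomial

set_option linter.unusedSectionVars false

variable {k A : Type*} [Field k] [CommRing A] [IsDomain A] [Algebra k A]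

lemma mem_kPlusX_iff {f : A[X]} : f ∈ kPlusX k A ↔ f.coeff 0 ∈ (algebraMap k A).range :=
  Iff.rfl

/-- `a · X^(i+1)` as an element of `R`. -/
noncomputable def cX (a : A) (i : ℕ) : kPlusX k A :=
  ⟨C a * X ^ (i + 1), by simp [mem_kPlusX_iff, coeff_X_pow]⟩

/-- `X^n` as an element of `R`. -/
noncomputable def Xp (n : ℕ) : kPlusX k A :=
  ⟨X ^ n, by rcases n with _ | n <;> simp [mem_kPlusX_iff, coeff_X_pow]⟩

/-- The `i`-th homogeneous component of an element of `R`, as an element of `R`. -/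
noncomputable def comp (f : kPlusX k A) (i : ℕ) : kPlusX k A :=
  ⟨C ((f : A[X]).coeff i) * X ^ i, by
    rcases i with _ | n
    · simp only [pow_zero, mul_one, mem_kPlusX_iff, coeff_C, if_pos rfl]
      exact f.2
    · simp [mem_kPlusX_iff, coeff_X_pow]⟩

lemma sum_comp (f : kPlusX k A) :
    f = ∑ i ∈ Finset.range ((f : A[X]).natDegree + 1), comp f i := by
  apply Subtype.ext
  push_cast [comp]
  conv_lhs => rw [(f : A[X]).as_sum_range]
  simp [C_mul_X_pow_eq_monomial]

lemma mem_of_comp {P : Ideal (kPlusX k A)} {f : kPlusX k A}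
    (h : ∀ i, comp f i ∈ P) : f ∈ P := by
  rw [sum_comp f]
  exact Ideal.sum_mem _ fun i _ => h i

lemma comp_mem {P : Ideal (kPlusX k A)} (hhom : IsHomog P) {f : kPlusX k A}
    (hf : f ∈ P) (i : ℕ) : comp f i ∈ P :=
  hhom f hf i (comp f i) rfl

lemma range_unit {a : A} (ha : a ∈ (algebraMap k A).range) (h0 : a ≠ 0) : IsUnit a := by
  obtain ⟨c, rfl⟩ := ha
  have hc : c ≠ 0 := by rintro rfl; simp at h0
  exact (isUnit_iff_ne_zero.mpr hc).map (algebraMap k A)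

lemma eq_zero_of_range_of_prime {q : Ideal A} (hq : q.IsPrime) {a : A}
    (ha : a ∈ q) (hr : a ∈ (algebraMap k A).range) : a = 0 := by
  by_contra h0
  exact hq.ne_top (q.eq_top_of_isUnit_mem ha (range_unit hr h0))

lemma coeff0_eq_zero_of_mem {P : Ideal (kPlusX k A)} (hP : P.IsPrime) (hhom : IsHomog P)
    {f : kPlusX k A} (hf : f ∈ P) : (f : A[X]).coeff 0 = 0 := by
  by_contra h0
  have hu : IsUnit ((f : A[X]).coeff 0) := range_unit f.2 h0
  have hu' : IsUnit (comp f 0) := by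
    obtain ⟨c, hc⟩ := (f : kPlusX k A).2
    have hc0 : c ≠ 0 := by rintro rfl; rw [map_zero] at hc; exact h0 hc.symm
    refine IsUnit.of_mul_eq_one ⟨C (algebraMap k A c⁻¹), by simp [mem_kPlusX_iff]⟩ ?_
    apply Subtype.ext
    push_cast [comp]
    rw [pow_zero, mul_one, ← hc, ← C_mul, ← map_mul, mul_inv_cancel₀ hc0, map_one, C_1]
  exact hP.ne_top (P.eq_top_of_isUnit_mem (comp_mem hhom hf 0) hu')

/-- The homogeneous prime of `R` obtained from an ideal of `A`. -/
noncomputable def liftP (q : Ideal A) : Ideal (kPlusX k A) :=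
  Ideal.comap (kPlusX k A).subtype (Ideal.map (C : A →+* A[X]) q)

lemma mem_liftP {q : Ideal A} {f : kPlusX k A} :
    f ∈ liftP (k := k) q ↔ ∀ i, (f : A[X]).coeff i ∈ q := by
  rw [liftP, Ideal.mem_comap, Ideal.mem_map_C_iff]
  rfl

/-- The irrelevant maximal homogeneous ideal of `R`. -/
noncomputable def topP : Ideal (kPlusX k A) :=
  Ideal.comap (kPlusX k A).subtype (Ideal.span {(X : A[X])})

lemma mem_topP {f : kPlusX k A} : f ∈ topP (k := k) (A := A) ↔ (f : A[X]).coeff 0 = 0 := by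
  rw [topP, Ideal.mem_comap, Ideal.mem_span_singleton, X_dvd_iff]
  rfl

lemma liftP_isPrime {q : Ideal A} (hq : q.IsPrime) : (liftP (k := k) q).IsPrime :=
  haveI := (Ideal.isPrime_map_C_iff_isPrime q).mpr hq
  Ideal.IsPrime.comap _

lemma topP_isPrime : (topP (k := k) (A := A)).IsPrime :=
  haveI : (Ideal.span {(X : A[X])}).IsPrime :=
    (Ideal.span_singleton_prime X_ne_zero).mpr prime_X
  Ideal.IsPrime.comap _

lemma isHomog_liftP (q : Ideal A) : IsHomog (liftP (k := k) q) := by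
  intro f hf i g hg
  rw [mem_liftP] at hf ⊢
  intro j
  have := hf i
  rw [hg, coeff_C_mul, coeff_X_pow]
  rcases eq_or_ne j i with rfl | hji
  · simpa using this
  · simp [hji]

lemma isHomog_topP : IsHomog (topP (k := k) (A := A)) := by
  intro f hf i g hg
  rw [mem_topP] at hf ⊢
  rw [hg]
  rcases i with _ | n
  · simp [hf]
  · simp [coeff_X_pow]

lemma cX_mem_liftP_iff {q : Ideal A} {a : A} : cX a 0 ∈ liftP (k := k) q ↔ a ∈ q := by
  rw [mem_liftP]
  constructor
  · intro h
    have := h 1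
    simpa [cX, coeff_C_mul, coeff_X_pow] using this
  · intro ha j
    show (C a * X ^ 1).coeff j ∈ q
    rw [coeff_C_mul, coeff_X_pow]
    rcases eq_or_ne j 1 with rfl | hj
    · simpa using ha
    · simp [hj]

lemma liftP_le_liftP {q q' : Ideal A} : liftP (k := k) q ≤ liftP q' ↔ q ≤ q' := by
  constructor
  · intro h a ha
    exact cX_mem_liftP_iff.mp (h (cX_mem_liftP_iff.mpr ha))
  · intro h f hf
    rw [mem_liftP] at hf ⊢
    exact fun i => h (hf i)

lemma liftP_le_topP {q : Ideal A} (hq : q.IsPrime) : liftP (k := k) q ≤ topP := by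
  intro f hf
  rw [mem_topP]
  exact eq_zero_of_range_of_prime hq (mem_liftP.mp hf 0) f.2

lemma X_mem_topP : (Xp 1 : kPlusX k A) ∈ topP := by
  rw [mem_topP]
  simp [Xp]

lemma not_topP_le_liftP {q : Ideal A} (hq : q.IsPrime) : ¬ topP ≤ liftP (k := k) q := by
  intro h
  have h1 : (1 : A) ∈ q := by
    have := mem_liftP.mp (h X_mem_topP) 1
    simpa [Xp, coeff_X_pow] using this
  exact hq.ne_top ((Ideal.eq_top_iff_one q).mpr h1)

end KPlusXAux


namespace KPlusXAux

open Polynomial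

set_option linter.unusedSectionVars false

variable {k A : Type*} [Field k] [CommRing A] [IsDomain A] [Algebra k A]

/-- The common value of the positive-degree components of a homogeneous prime not
containing `X`. -/
noncomputable def degOne (P : Ideal (kPlusX k A)) (hP : P.IsPrime) : Ideal A where
  carrier := {a | cX a 0 ∈ P}
  add_mem' := by
    intro a b ha hb
    simp only [Set.mem_setOf_eq] at *
    have h : (cX (a + b) 0 : kPlusX k A) = cX a 0 + cX b 0 := Subtype.ext (by simp [cX, C_add]; ring)
    rw [h]
    exact P.add_mem ha hb
  zero_mem' := by
    have h : (cX (0 : A) 0 : kPlusX k A) = 0 := Subtype.ext (by simp [cX])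
    simp only [Set.mem_setOf_eq, h]
    exact P.zero_mem
  smul_mem' := by
    intro b a ha
    simp only [Set.mem_setOf_eq, smul_eq_mul] at *
    have h3 : (cX (b * a) 0 : kPlusX k A) ^ 3 = cX b 0 * cX a 0 * cX ((b * a) * (b * a)) 0 :=
      Subtype.ext (by simp [cX, C_mul]; ring)
    have hm : cX (b * a) 0 ^ 3 ∈ P := by
      rw [h3]
      exact Ideal.mul_mem_right _ _ (Ideal.mul_mem_left _ _ ha)
    exact (hP.pow_mem_iff_mem 3 (by norm_num)).mp hm

lemma mem_degOne {P : Ideal (kPlusX k A)} {hP : P.IsPrime} {a : A} :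
    a ∈ degOne P hP ↔ cX a 0 ∈ P := Iff.rfl

lemma cX_one_zero : (cX (1 : A) 0 : kPlusX k A) = Xp 1 := Subtype.ext (by simp [cX, Xp])

lemma degOne_isPrime {P : Ideal (kPlusX k A)} (hP : P.IsPrime)
    (hX : (Xp 1 : kPlusX k A) ∉ P) : (degOne P hP).IsPrime := by
  rw [Ideal.isPrime_iff]
  constructor
  · intro htop
    apply hX
    have h1 : (1 : A) ∈ degOne P hP := htop ▸ Submodule.mem_top
    rwa [mem_degOne, cX_one_zero] at h1
  · intro a b hab
    rw [mem_degOne] at hab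
    have h2 : (cX a 0 : kPlusX k A) * cX b 0 = cX (a * b) 0 * Xp 1 :=
      Subtype.ext (by simp [cX, Xp, C_mul]; ring)
    have hm : cX a 0 * cX b 0 ∈ P := by
      rw [h2]; exact Ideal.mul_mem_right _ _ hab
    exact hP.mem_or_mem hm

lemma homog_prime_cases (P : Ideal (kPlusX k A)) (hP : P.IsPrime) (hhom : IsHomog P) :
    (∃ q : Ideal A, q.IsPrime ∧ P = liftP q) ∨ P = topP := by
  by_cases hX : (Xp 1 : kPlusX k A) ∈ P
  · right
    apply le_antisymm
    · intro f hf
      exact mem_topP.mpr (coeff0_eq_zero_of_mem hP hhom hf)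
    · intro f hf
      rw [mem_topP] at hf
      apply mem_of_comp
      intro i
      match i with
      | 0 =>
        have h : comp f 0 = 0 := Subtype.ext (by simp [comp, hf])
        rw [h]; exact P.zero_mem
      | 1 =>
        have h2 : comp f 1 * comp f 1 =
            cX ((f : A[X]).coeff 1 * (f : A[X]).coeff 1) 0 * Xp 1 :=
          Subtype.ext (by simp [comp, cX, Xp, C_mul]; ring)
        have hm : comp f 1 * comp f 1 ∈ P := by
          rw [h2]; exact Ideal.mul_mem_left _ _ hX
        rcases hP.mem_or_mem hm with h | h <;> exact h
      | (n + 2) =>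
        have h2 : comp f (n + 2) = cX ((f : A[X]).coeff (n + 2)) n * Xp 1 :=
          Subtype.ext (by simp [comp, cX, Xp]; ring)
        rw [h2]; exact Ideal.mul_mem_left _ _ hX
  · left
    refine ⟨degOne P hP, degOne_isPrime hP hX, le_antisymm ?_ ?_⟩
    · intro f hf
      rw [mem_liftP]
      intro i
      match i with
      | 0 =>
        rw [coeff0_eq_zero_of_mem hP hhom hf]
        exact Submodule.zero_mem _
      | (n + 1) =>
        rw [mem_degOne]
        have hcomp : comp f (n + 1) ∈ P := comp_mem hhom hf (n + 1)
        have hpow : cX ((f : A[X]).coeff (n + 1)) 0 ^ (n + 2) =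
            comp f (n + 1) * cX (((f : A[X]).coeff (n + 1)) ^ (n + 1)) 0 :=
          Subtype.ext (by simp [comp, cX, C_pow, C_mul]; ring)
        have hm : cX ((f : A[X]).coeff (n + 1)) 0 ^ (n + 2) ∈ P := by
          rw [hpow]; exact Ideal.mul_mem_right _ _ hcomp
        exact (hP.pow_mem_iff_mem (n + 2) (by omega)).mp hm
    · intro f hf
      rw [mem_liftP] at hf
      apply mem_of_comp
      intro i
      match i with
      | 0 =>
        have h0 : (f : A[X]).coeff 0 = 0 :=
          eq_zero_of_range_of_prime (degOne_isPrime hP hX) (hf 0) f.2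
        have h : comp f 0 = 0 := Subtype.ext (by simp [comp, h0])
        rw [h]; exact P.zero_mem
      | (n + 1) =>
        have h2 : comp f (n + 1) = cX ((f : A[X]).coeff (n + 1)) 0 * Xp n :=
          Subtype.ext (by simp [comp, cX, Xp]; ring)
        rw [h2]
        exact Ideal.mul_mem_right _ _ (mem_degOne.mp (hf (n + 1)))

/-- The map from `WithTop (PrimeSpectrum A)` to homogeneous primes of `R`. -/
noncomputable def eFun :
    WithTop (PrimeSpectrum A) → {I : Ideal (kPlusX k A) // I.IsPrime ∧ IsHomog I} :=
  WithTop.recTopCoe ⟨topP, topP_isPrime, isHomog_topP⟩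
    fun p => ⟨liftP p.asIdeal, liftP_isPrime p.2, isHomog_liftP p.asIdeal⟩

lemma eFun_le_iff (a b : WithTop (PrimeSpectrum A)) :
    eFun (k := k) a ≤ eFun b ↔ a ≤ b := by
  induction a using WithTop.recTopCoe with
  | top =>
    induction b using WithTop.recTopCoe with
    | top => simp
    | coe q =>
      simp only [eFun, WithTop.recTopCoe, le_refl]
      constructor
      · intro h
        exact absurd h (not_topP_le_liftP q.2)
      · intro h
        exact absurd h (by simp)
  | coe q =>
    induction b using WithTop.recTopCoe with
    | top =>
      simp only [eFun, WithTop.recTopCoe]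
      constructor
      · intro _; exact le_top
      · intro _
        exact liftP_le_topP q.2
    | coe q' =>
      show liftP q.asIdeal ≤ liftP q'.asIdeal ↔ _
      rw [liftP_le_liftP, WithTop.coe_le_coe, PrimeSpectrum.asIdeal_le_asIdeal]

lemma eFun_bijective : Function.Bijective (eFun (k := k) (A := A)) := by
  constructor
  · intro a b hab
    exact le_antisymm ((eFun_le_iff a b).mp hab.le) ((eFun_le_iff b a).mp hab.ge)
  · rintro ⟨P, hP, hhom⟩
    rcases homog_prime_cases P hP hhom with ⟨q, hq, rfl⟩ | rfl
    · exact ⟨((⟨q, hq⟩ : PrimeSpectrum A) : WithTop (PrimeSpectrum A)), rfl⟩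
    · exact ⟨⊤, rfl⟩

/-- The order isomorphism between `WithTop (PrimeSpectrum A)` and the homogeneous primes. -/
noncomputable def eIso :
    WithTop (PrimeSpectrum A) ≃o {I : Ideal (kPlusX k A) // I.IsPrime ∧ IsHomog I} :=
  { Equiv.ofBijective eFun eFun_bijective with
    map_rel_iff' := by
      intro a b
      exact eFun_le_iff a b }

end KPlusXAux


/-- for a domain `A` containing a field `k` and the graded ring
`R = k + X·A[X]`, the graded Krull dimension of `R` (the supremum of lengths of chains of
homogeneous prime ideals, i.e. the Krull dimension of the poset of homogeneous primes)
equals `ringKrullDim A + 1`. -/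
theorem gradedKrullDim_kPlusX (k A : Type*) [Field k] [CommRing A]
    [IsDomain A] [Algebra k A] :
    Order.krullDim {I : Ideal (kPlusX k A) // I.IsPrime ∧ IsHomog I} =
      ringKrullDim A + (1 : WithBot ℕ∞) := by
  have : Nonempty (PrimeSpectrum A) := ⟨⟨⊥, Ideal.bot_prime⟩⟩
  rw [← Order.krullDim_eq_of_orderIso (KPlusXAux.eIso (k := k) (A := A)),
    Order.krullDim_WithTop]
  rfl
end

section
/- Let k be a field and A a commutative integral domain that is a k-algebra, and let R = k + X·A[X] be the subring of A[X] consisting of polynomials with constant term in (the image of) k. Then the Krull dimension of the polynomial ring A[X] is at most the Krull dimension of R: ringKrullDim (Polynomial A) ≤ ringKrullDim R. -/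
open Polynomial

section PseudoDiv

variable {D : Type*} [CommRing D] [IsDomain D]

/-- Pseudo-division in a polynomial ring over a domain. -/
private lemma pseudo_div (g : D[X]) (hg : g ≠ 0) :
    ∀ (n : ℕ) (f : D[X]), f.natDegree ≤ n →
    ∃ (t : ℕ) (u r : D[X]), C g.leadingCoeff ^ t * f = u * g + r ∧ r.degree < g.degree := by
  intro n
  induction n using Nat.strong_induction_on with
  | _ n ih =>
    intro f hfn
    by_cases hdeg : f.degree < g.degree
    · exact ⟨0, 0, f, by ring, hdeg⟩
    push_neg at hdeg
    have hf : f ≠ 0 := by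
      rintro rfl
      simp only [degree_zero, le_bot_iff, degree_eq_bot] at hdeg
      exact hg hdeg
    set a := f.leadingCoeff with ha_def
    set b := g.leadingCoeff with hb_def
    have ha : a ≠ 0 := leadingCoeff_ne_zero.mpr hf
    have hb : b ≠ 0 := leadingCoeff_ne_zero.mpr hg
    set d := f.natDegree - g.natDegree with hd_def
    have hdle : g.natDegree ≤ f.natDegree := natDegree_le_natDegree hdeg
    have h1 : (C b * f).degree = f.degree := by
      rw [degree_mul, degree_C hb, zero_add]
    have h2 : (C a * X ^ d * g).degree = f.degree := by
      rw [degree_mul, degree_mul, degree_C ha, degree_X_pow, zero_add,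
        degree_eq_natDegree hg, degree_eq_natDegree hf]
      exact_mod_cast congrArg (Nat.cast : ℕ → WithBot ℕ) (Nat.sub_add_cancel hdle)
    have h3 : (C b * f).leadingCoeff = (C a * X ^ d * g).leadingCoeff := by
      simp only [leadingCoeff_mul, leadingCoeff_C, leadingCoeff_X_pow]
      ring
    set h := C b * f - C a * X ^ d * g with hdefn
    have hdlt : h.degree < f.degree := by
      rw [hdefn, ← h1]
      exact degree_sub_lt (h1.trans h2.symm) (mul_ne_zero (C_ne_zero.mpr hb) hf) h3
    by_cases hh : h = 0
    · refine ⟨1, C a * X ^ d, 0, ?_, ?_⟩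
      · rw [pow_one, add_zero]
        have h0 : C b * f - C a * X ^ d * g = 0 := by rw [← hdefn]; exact hh
        exact sub_eq_zero.mp h0
      · simpa only [degree_zero] using bot_lt_iff_ne_bot.mpr (degree_eq_bot.not.mpr hg)
    · have hnh : h.natDegree < n :=
        lt_of_lt_of_le (natDegree_lt_natDegree hh hdlt) hfn
      obtain ⟨t, u, r, heq, hr⟩ := ih h.natDegree hnh h le_rfl
      refine ⟨t + 1, u + C b ^ t * (C a * X ^ d), r, ?_, hr⟩
      have hdefn' : C b * f = h + C a * X ^ d * g := by rw [hdefn]; ring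
      calc C b ^ (t + 1) * f = C b ^ t * (C b * f) := by ring
        _ = C b ^ t * h + C b ^ t * (C a * X ^ d * g) := by rw [hdefn']; ring
        _ = (u * g + r) + C b ^ t * (C a * X ^ d * g) := by rw [heq]
        _ = (u + C b ^ t * (C a * X ^ d)) * g + r := by ring

/-- In `D[X]` over a domain `D`, there are no two comparable primes `q < q'` with
`q ≠ ⊥` both lying over `(0) ⊂ D`. -/
private lemma no_two_primes {q q' : Ideal D[X]} (hq : q.IsPrime) (hq' : q'.IsPrime)
    (hlt : q < q') (hcon : q'.comap (C : D →+* D[X]) = ⊥) : q = ⊥ := by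
  classical
  by_contra hne
  have hconst : ∀ c : D, C c ∈ q' → c = 0 := by
    intro c hc
    have : c ∈ q'.comap (C : D →+* D[X]) := hc
    simpa [hcon] using this
  have hCnot : ∀ c : D, c ≠ 0 → C c ∉ q := fun c hc hmem => hc (hconst c (hlt.le hmem))
  obtain ⟨f0, hf0q, hf0⟩ := Submodule.exists_mem_ne_zero_of_ne_bot hne
  obtain ⟨hle, g0, hg0q', hg0q⟩ := SetLike.lt_iff_le_and_exists.mp hlt
  -- minimal degree nonzero element of q
  have hPf : ∃ m : ℕ, ∃ f : D[X], f ∈ q ∧ f ≠ 0 ∧ f.natDegree = m :=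
    ⟨f0.natDegree, f0, hf0q, hf0, rfl⟩
  obtain ⟨f, hfq, hfne, hfdeg⟩ := Nat.find_spec hPf
  have hfmin : ∀ f' : D[X], f' ∈ q → f' ≠ 0 → f.natDegree ≤ f'.natDegree := by
    intro f' h1 h2
    rw [hfdeg]
    exact Nat.find_min' hPf ⟨f', h1, h2, rfl⟩
  -- minimal degree element of q' \ q
  have hPg : ∃ m : ℕ, ∃ g : D[X], g ∈ q' ∧ g ∉ q ∧ g.natDegree = m :=
    ⟨g0.natDegree, g0, hg0q', hg0q, rfl⟩
  obtain ⟨g, hgq', hgq, hgdeg⟩ := Nat.find_spec hPg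
  have hgmin : ∀ g' : D[X], g' ∈ q' → g' ∉ q → g.natDegree ≤ g'.natDegree := by
    intro g' h1 h2
    rw [hgdeg]
    exact Nat.find_min' hPg ⟨g', h1, h2, rfl⟩
  have hgne : g ≠ 0 := fun h => hgq (h ▸ q.zero_mem)
  have ha : f.leadingCoeff ≠ 0 := leadingCoeff_ne_zero.mpr hfne
  have hb : g.leadingCoeff ≠ 0 := leadingCoeff_ne_zero.mpr hgne
  by_cases hcase : f.degree ≤ g.degree
  · -- reduce g by f to contradict minimality of g
    set e := g.natDegree - f.natDegree with he_def
    set h := C f.leadingCoeff * g - C g.leadingCoeff * X ^ e * f with hdefn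
    have hhq' : h ∈ q' := sub_mem (Ideal.mul_mem_left _ _ hgq')
      (Ideal.mul_mem_left _ _ (hle hfq))
    have hhq : h ∉ q := by
      intro hmem
      have hCag : C f.leadingCoeff * g ∈ q := by
        have := add_mem hmem (Ideal.mul_mem_left _ (C g.leadingCoeff * X ^ e) hfq)
        rw [hdefn] at this
        convert this using 1
        ring
      rcases hq.mem_or_mem hCag with h1 | h2
      · exact hCnot _ ha h1
      · exact hgq h2
    have hhne : h ≠ 0 := fun h0 => hhq (h0 ▸ q.zero_mem)
    have hele : f.natDegree ≤ g.natDegree := natDegree_le_natDegree hcase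
    have h1 : (C f.leadingCoeff * g).degree = g.degree := by
      rw [degree_mul, degree_C ha, zero_add]
    have h2 : (C g.leadingCoeff * X ^ e * f).degree = g.degree := by
      rw [degree_mul, degree_mul, degree_C hb, degree_X_pow, zero_add,
        degree_eq_natDegree hfne, degree_eq_natDegree hgne]
      exact_mod_cast congrArg (Nat.cast : ℕ → WithBot ℕ) (Nat.sub_add_cancel hele)
    have h3 : (C f.leadingCoeff * g).leadingCoeff
        = (C g.leadingCoeff * X ^ e * f).leadingCoeff := by
      simp only [leadingCoeff_mul, leadingCoeff_C, leadingCoeff_X_pow]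
      ring
    have hdlt : h.degree < g.degree := by
      rw [hdefn, ← h1]
      exact degree_sub_lt (h1.trans h2.symm) (mul_ne_zero (C_ne_zero.mpr ha) hgne) h3
    exact absurd (hgmin h hhq' hhq) (not_le.mpr (natDegree_lt_natDegree hhne hdlt))
  · push_neg at hcase
    -- g has degree ≥ 1
    have hgdeg1 : g.natDegree ≠ 0 := by
      intro h0
      have hgC : g = C (g.coeff 0) := eq_C_of_natDegree_eq_zero h0
      have hc0 : g.coeff 0 = 0 := hconst _ (hgC ▸ hgq')
      exact hgne (hgC.trans (by rw [hc0, map_zero]))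
    obtain ⟨t, u, r, heq, hr⟩ := pseudo_div g hgne f.natDegree f le_rfl
    have hrdef : r = C g.leadingCoeff ^ t * f - u * g := by rw [heq]; ring
    have hrq' : r ∈ q' := by
      rw [hrdef]
      exact sub_mem (Ideal.mul_mem_left _ _ (hle hfq)) (Ideal.mul_mem_left _ _ hgq')
    have hrq : r ∈ q := by
      by_contra hrnq
      have hrne : r ≠ 0 := fun h0 => hrnq (h0 ▸ q.zero_mem)
      exact absurd (hgmin r hrq' hrnq) (not_le.mpr (natDegree_lt_natDegree hrne hr))
    have hug : u * g ∈ q := by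
      have : u * g = C g.leadingCoeff ^ t * f - r := by rw [hrdef]; ring
      rw [this]
      exact sub_mem (Ideal.mul_mem_left _ _ hfq) hrq
    have huq : u ∈ q := by
      rcases hq.mem_or_mem hug with h1 | h2
      · exact h1
      · exact absurd h2 hgq
    have hCbt : (C g.leadingCoeff ^ t * f) ≠ 0 :=
      mul_ne_zero (pow_ne_zero _ (C_ne_zero.mpr hb)) hfne
    have hCbtdeg : (C g.leadingCoeff ^ t * f).degree = f.degree := by
      rw [degree_mul, ← map_pow, degree_C (pow_ne_zero _ hb), zero_add]
    by_cases hu : u = 0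
    · rw [hu, zero_mul, zero_add] at heq
      rw [← heq, hCbtdeg] at hr
      exact absurd (hr.trans hcase) (lt_irrefl _)
    · have h1 : f.natDegree ≤ u.natDegree := hfmin u huq hu
      have hud : (u * g).degree = f.degree := by
        have h2 : u * g = C g.leadingCoeff ^ t * f - r := by rw [hrdef]; ring
        rw [h2, degree_sub_eq_left_of_degree_lt, hCbtdeg]
        rw [hCbtdeg]
        exact hr.trans hcase
      rw [degree_mul, degree_eq_natDegree hu, degree_eq_natDegree hgne,
        degree_eq_natDegree hfne] at hud
      have hnat : u.natDegree + g.natDegree = f.natDegree := by exact_mod_cast hud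
      omega

end PseudoDiv

section SpecialChain

variable {A : Type*} [CommRing A]

/-- If `Q < P` are primes of `A[X]` and `(P ∩ A)[X] ≤ Q`, then `Q = (P ∩ A)[X]`. -/
private lemma fiber_eq {P Q : Ideal A[X]} (hP : P.IsPrime) (hQ : Q.IsPrime)
    (hlt : Q < P)
    (hle : Ideal.map (C : A →+* A[X]) (P.comap (C : A →+* A[X])) ≤ Q) :
    Q = Ideal.map (C : A →+* A[X]) (P.comap (C : A →+* A[X])) := by
  haveI := hP
  haveI := hQ
  set p := P.comap (C : A →+* A[X]) with hp_def
  haveI : p.IsPrime := Ideal.IsPrime.comap _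
  let φ : A[X] →+* (A ⧸ p)[X] := mapRingHom (Ideal.Quotient.mk p)
  have hsurj : Function.Surjective φ :=
    Polynomial.map_surjective _ Ideal.Quotient.mk_surjective
  have hker : RingHom.ker φ = Ideal.map (C : A →+* A[X]) p := by
    rw [Polynomial.ker_mapRingHom, Ideal.mk_ker]
  have hkerQ : RingHom.ker φ ≤ Q := hker.le.trans hle
  have hkerP : RingHom.ker φ ≤ P := hkerQ.trans hlt.le
  haveI hQbar : (Q.map φ).IsPrime := Ideal.map_isPrime_of_surjective hsurj hkerQ
  haveI hPbar : (P.map φ).IsPrime := Ideal.map_isPrime_of_surjective hsurj hkerP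
  have hcomapQ : (Q.map φ).comap φ = Q := by
    rw [Ideal.comap_map_of_surjective φ hsurj, ← RingHom.ker_eq_comap_bot,
      sup_eq_left.mpr hkerQ]
  have hcomapP : (P.map φ).comap φ = P := by
    rw [Ideal.comap_map_of_surjective φ hsurj, ← RingHom.ker_eq_comap_bot,
      sup_eq_left.mpr hkerP]
  have hltbar : Q.map φ < P.map φ := by
    refine lt_of_le_of_ne (Ideal.map_mono hlt.le) ?_
    intro hEq
    exact hlt.ne (by rw [← hcomapQ, ← hcomapP, hEq])
  have hconbar : (P.map φ).comap (C : (A ⧸ p) →+* (A ⧸ p)[X]) = ⊥ := by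
    refine le_antisymm ?_ bot_le
    intro x hx
    obtain ⟨a, rfl⟩ := Ideal.Quotient.mk_surjective x
    rw [Ideal.mem_comap] at hx
    have hφCa : φ (Polynomial.C a) ∈ P.map φ := by
      have : φ (Polynomial.C a) = Polynomial.C (Ideal.Quotient.mk p a) := by
        simp [φ]
      rw [this]
      exact hx
    have hCa : Polynomial.C a ∈ P := by
      rw [← hcomapP]
      exact hφCa
    rw [Ideal.mem_bot]
    exact Ideal.Quotient.eq_zero_iff_mem.mpr hCa
  have := no_two_primes hQbar hPbar hltbar hconbar
  rw [← hcomapQ, this, ← RingHom.ker_eq_comap_bot, hker]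

/-- Special chain lemma (Jaffard, for one variable): any chain of primes in `A[X]`
of length `n` yields a chain of length `≥ n - 1` ending exactly at `(P ∩ A)[X]`
where `P` is the top of the original chain. -/
private lemma special_chain :
    ∀ (n : ℕ) (c : LTSeries (PrimeSpectrum A[X])), c.length ≤ n →
    ∃ d : LTSeries (PrimeSpectrum A[X]),
      c.length ≤ d.length + 1 ∧
      d.last.asIdeal
        = Ideal.map (C : A →+* A[X]) (c.last.asIdeal.comap (C : A →+* A[X])) := by
  intro n
  induction n with
  | zero =>
    intro c hc
    haveI := c.last.isPrime
    haveI : (c.last.asIdeal.comap (C : A →+* A[X])).IsPrime := Ideal.IsPrime.comap _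
    refine ⟨RelSeries.singleton _ ⟨Ideal.map (C : A →+* A[X])
      (c.last.asIdeal.comap (C : A →+* A[X])),
      Ideal.isPrime_map_C_of_isPrime⟩, by omega, ?_⟩
    rw [RelSeries.last_singleton]
  | succ n ih =>
    intro c hc
    by_cases h0 : c.length = 0
    · haveI := c.last.isPrime
      haveI : (c.last.asIdeal.comap (C : A →+* A[X])).IsPrime := Ideal.IsPrime.comap _
      refine ⟨RelSeries.singleton _ ⟨Ideal.map (C : A →+* A[X])
        (c.last.asIdeal.comap (C : A →+* A[X])),
        Ideal.isPrime_map_C_of_isPrime⟩, by omega, ?_⟩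
      rw [RelSeries.last_singleton]
    · set Q := c.eraseLast.last with hQ_def
      set P := c.last with hP_def
      have hQP : Q < P := c.eraseLast_last_rel_last h0
      haveI := P.isPrime
      haveI := Q.isPrime
      haveI : (P.asIdeal.comap (C : A →+* A[X])).IsPrime := Ideal.IsPrime.comap _
      by_cases hcase : Ideal.map (C : A →+* A[X]) (P.asIdeal.comap (C : A →+* A[X]))
          ≤ Q.asIdeal
      · have heq := fiber_eq P.isPrime Q.isPrime hQP hcase
        refine ⟨c.eraseLast, ?_, heq⟩
        rw [RelSeries.eraseLast_length]
        omega
      · obtain ⟨d', hlen, hlast⟩ := ih c.eraseLast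
          (by rw [RelSeries.eraseLast_length]; omega)
        have hmaplt : Ideal.map (C : A →+* A[X]) (Q.asIdeal.comap (C : A →+* A[X]))
            < Ideal.map (C : A →+* A[X]) (P.asIdeal.comap (C : A →+* A[X])) := by
          refine lt_of_le_of_ne
            (Ideal.map_mono (Ideal.comap_mono hQP.le)) ?_
          intro hEq
          exact hcase (hEq ▸ Ideal.map_comap_le)
        refine ⟨d'.snoc ⟨Ideal.map (C : A →+* A[X]) (P.asIdeal.comap (C : A →+* A[X])),
          Ideal.isPrime_map_C_of_isPrime⟩ ?_, ?_, ?_⟩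
        · show (_ : PrimeSpectrum A[X]) < _
          rw [← PrimeSpectrum.asIdeal_lt_asIdeal, hlast]
          exact hmaplt
        · rw [RelSeries.snoc_length]
          rw [RelSeries.eraseLast_length] at hlen
          omega
        · rw [RelSeries.last_snoc]

end SpecialChain

section Contract

variable {k A : Type*} [Field k] [CommRing A] [IsDomain A] [Algebra k A]

/-- Contraction to `R = k + X·A[X]` is strictly monotone on primes of `A[X]`
not containing `X`. -/
private lemma contract_lt {P Q : Ideal A[X]} (hP : P.IsPrime) (hQ : Q.IsPrime)
    (h : P < Q) (hX : X ∉ Q) :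
    P.comap (kPlusX k A).subtype < Q.comap (kPlusX k A).subtype := by
  obtain ⟨hle, f, hfQ, hfP⟩ := SetLike.lt_iff_le_and_exists.mp h
  rw [SetLike.lt_iff_le_and_exists]
  refine ⟨Ideal.comap_mono hle, ⟨X ^ 2 * f, ?_⟩, ?_, ?_⟩
  · show (X ^ 2 * f).coeff 0 ∈ (algebraMap k A).range
    simp [mul_coeff_zero, coeff_X_pow]
  · show X ^ 2 * f ∈ Q
    exact Q.mul_mem_left _ hfQ
  · show X ^ 2 * f ∉ P
    intro hmem
    rcases hP.mem_or_mem hmem with h1 | h2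
    · exact hX (hle (hP.mem_of_pow_mem 2 h1))
    · exact hfP h2

/-- Contract a chain of primes of `A[X]` avoiding `X` to a chain in `R = k + X·A[X]`. -/
private lemma contract_chain (c : LTSeries (PrimeSpectrum A[X]))
    (hX : X ∉ c.last.asIdeal) :
    ∃ e : LTSeries (PrimeSpectrum (kPlusX k A)), e.length = c.length ∧
      e.last.asIdeal = c.last.asIdeal.comap (kPlusX k A).subtype := by
  have hXall : ∀ i : Fin (c.length + 1), X ∉ (c i).asIdeal := by
    intro i hXi
    exact hX ((c.monotone (Fin.le_last i)) hXi)
  refine ⟨⟨c.length, fun i => ⟨(c i).asIdeal.comap (kPlusX k A).subtype,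
    by haveI := (c i).isPrime; exact Ideal.IsPrime.comap _⟩, ?_⟩, rfl, rfl⟩
  intro i
  show (_ : PrimeSpectrum (kPlusX k A)) < _
  rw [← PrimeSpectrum.asIdeal_lt_asIdeal]
  exact contract_lt (c i.castSucc).isPrime (c i.succ).isPrime
    (c.strictMono (Fin.castSucc_lt_succ (i := i))) (hXall i.succ)

end Contract

/-- for a domain `A` containing a field `k` and `R = k + X·A[X]`, the
Krull dimension of `A[X]` is at most the Krull dimension of `R`. -/
theorem krullDim_polynomial_le_krullDim_kPlusX (k A : Type*) [Field k] [CommRing A]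
    [IsDomain A] [Algebra k A] :
    ringKrullDim (Polynomial A) ≤ ringKrullDim (kPlusX k A) := by
  have key : ∀ c : LTSeries (PrimeSpectrum (Polynomial A)),
      ∃ e : LTSeries (PrimeSpectrum (kPlusX k A)), c.length ≤ e.length := by
    intro c
    by_cases hX : (X : A[X]) ∈ c.last.asIdeal
    · -- use the special chain lemma
      obtain ⟨d, hlen, hlast⟩ := special_chain c.length c le_rfl
      haveI := c.last.isPrime
      haveI h𝔭 : (c.last.asIdeal.comap (C : A →+* A[X])).IsPrime := Ideal.IsPrime.comap _
      have hXd : (X : A[X]) ∉ d.last.asIdeal := by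
        rw [hlast]
        intro hmem
        have h1 := Ideal.mem_map_C_iff.mp hmem 1
        rw [coeff_X_one] at h1
        exact h𝔭.ne_top (Ideal.eq_top_iff_one _ |>.mpr h1)
      obtain ⟨e0, helen, helast⟩ := contract_chain (k := k) d hXd
      haveI hMprime : (Ideal.span {(X : A[X])}).IsPrime :=
        (Ideal.span_singleton_prime Polynomial.X_ne_zero).mpr Polynomial.prime_X
      have hlt : e0.last < ⟨(Ideal.span {(X : A[X])}).comap (kPlusX k A).subtype,
          Ideal.IsPrime.comap _⟩ := by
        rw [← PrimeSpectrum.asIdeal_lt_asIdeal, helast, hlast]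
        rw [SetLike.lt_iff_le_and_exists]
        constructor
        · rintro ⟨f, hfR⟩ hf
          rw [Ideal.mem_comap] at hf ⊢
          rw [Ideal.mem_span_singleton]
          rw [X_dvd_iff]
          show f.coeff 0 = 0
          obtain ⟨cc, hcc⟩ := hfR
          have hf0 : f.coeff 0 ∈ c.last.asIdeal.comap (C : A →+* A[X]) :=
            Ideal.mem_map_C_iff.mp hf 0
          by_cases hcz : cc = 0
          · rw [← hcc, hcz, map_zero]
          · exfalso
            have hunit : IsUnit (f.coeff 0) := by
              rw [← hcc]
              exact (isUnit_iff_ne_zero.mpr hcz).map (algebraMap k A)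
            exact h𝔭.ne_top (Ideal.eq_top_of_isUnit_mem _ hf0 hunit)
        · have hXR : (X : A[X]) ∈ kPlusX k A := by
            show (X : A[X]).coeff 0 ∈ (algebraMap k A).range
            simp [coeff_X_zero]
          refine ⟨⟨X, hXR⟩, Ideal.mem_comap.mpr (Ideal.mem_span_singleton_self _), ?_⟩
          intro hmem
          have hmem' := Ideal.mem_comap.mp hmem
          rw [show ((kPlusX k A).subtype ⟨X, hXR⟩ : A[X]) = X from rfl] at hmem'
          have h1 := Ideal.mem_map_C_iff.mp hmem' 1
          rw [coeff_X_one] at h1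
          exact h𝔭.ne_top (Ideal.eq_top_iff_one _ |>.mpr h1)
      refine ⟨e0.snoc _ hlt, ?_⟩
      rw [RelSeries.snoc_length, helen]
      omega
    · obtain ⟨e, helen, _⟩ := contract_chain (k := k) c hX
      exact ⟨e, helen.ge⟩
  rw [ringKrullDim, ringKrullDim, Order.krullDim, Order.krullDim]
  refine iSup_le fun c => ?_
  obtain ⟨e, hlen⟩ := key c
  refine le_trans ?_ (le_iSup (fun p : LTSeries (PrimeSpectrum (kPlusX k A)) =>
    (p.length : WithBot ℕ∞)) e)
  exact_mod_cast hlen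
end
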